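/- For every positive integers h, r₁, every non-increasing sequence of non-negative integers m₁ ≥ m₂ ≥ ... ≥ m_{r₁} with m₁ ≤ h, and every ξ > 0, there exist λ > 0, positive reals k̄₁,...,k̄_{r₁}, and a symmetric positive definite 2hr₁ × 2hr₁ real matrix S such that the following holds: for every measurable C⋆ : [0,∞) → M_{2h}(ℝ) with C⋆(t) symmetric and ξ Id_{2h} ≤ C⋆(t) ≤ Id_{2h} for almost every t, every locally absolutely continuous function Y = (Y₁,...,Y_{r₁}) : [0,∞) → E^h_{m₁,...,m_{r₁}} satisfying Ẏ_l(t) = Y_{l+1}(t) − k̄_l p_l C⋆(t) Y₁(t) for l = 1,...,r₁ (with the convention Y_{r₁+1} = 0) for almost every t, satisfies d/dt (Y(t)ᵀ S Y(t)) ≤ −λ ‖Y(t)‖² for almost every t ≥ 0. -/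

import Mathlib

open MeasureTheory Filter Matrix

noncomputable section

/-- A `(T,μ)`-signal: a measurable function with values in `[0,1]` whose integral over any
window `[t, t+T]` with `t ≥ 0` is at least `μ`. -/
def IsPESignal (T μ : ℝ) (α : ℝ → ℝ) : Prop :=
  Measurable α ∧ (∀ t, α t ∈ Set.Icc (0:ℝ) 1) ∧
    ∀ t : ℝ, 0 ≤ t → μ ≤ ∫ s in t..(t + T), α s

/-- The orthogonal projection `p_m = diag(Id_{2m}, 0)` of `ℝ^{2h}` onto `ℝ^{2m} × {0}`. -/
def projP (h m : ℕ) : Matrix (Fin (2 * h)) (Fin (2 * h)) ℝ :=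
  Matrix.of fun i j => if i = j ∧ (i : ℕ) < 2 * m then 1 else 0

namespace CLP

/-! ### Scalar parameters -/

def Kc (ξ : ℝ) : ℝ := 4096 * (1 + ξ⁻¹) * (1 + ξ)

def kk (ξ : ℝ) (n : ℕ) : ℝ := ((Kc ξ) ^ (n ^ 2))⁻¹

def bb (ξ : ℝ) (n : ℕ) : ℝ := (64 / ξ) * 4096 ^ n * (Kc ξ) ^ (2 * n ^ 2)

def aaT (ξ : ℝ) : ℕ → ℝ
  | 0 => 1 / 2
  | (l + 1) => bb ξ l * (Kc ξ) ^ (2 * l + 1)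

def aa (ξ : ℝ) (n : ℕ) : ℝ := aaT ξ n + bb ξ n * ((Kc ξ) ^ (2 * n + 1))⁻¹

def lam (ξ : ℝ) : ℝ := min (ξ / 2) (64 / ξ)

set_option linter.unusedSectionVars false
variable {ξ : ℝ} (hξ : 0 < ξ)

section Arith
include hξ

lemma hK1 : (4096 : ℝ) ≤ Kc ξ := by
  have h1 : (1:ℝ) ≤ 1 + ξ⁻¹ := by
    have : 0 < ξ⁻¹ := inv_pos.2 hξ
    linarith
  have h2 : (1:ℝ) ≤ 1 + ξ := by linarith
  have h3 : 0 < ξ⁻¹ := inv_pos.2 hξ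
  unfold Kc; nlinarith

lemma hKpos : 0 < Kc ξ := lt_of_lt_of_le (by norm_num) (hK1 hξ)

lemma hKxi : (4096 : ℝ) ≤ ξ * Kc ξ := by
  have h : ξ * (1 + ξ⁻¹) = ξ + 1 := by field_simp
  have : ξ * Kc ξ = 4096 * (ξ + 1) * (1 + ξ) := by
    unfold Kc; rw [← h]; ring
  rw [this]; nlinarith

lemma kk_pos (n : ℕ) : 0 < kk ξ n := by
  have := hKpos hξ; unfold kk; positivity

lemma bb_pos (n : ℕ) : 0 < bb ξ n := by
  have := hKpos hξ; unfold bb; positivity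

lemma aaT_pos (n : ℕ) : 0 < aaT ξ n := by
  cases n with
  | zero => norm_num [aaT]
  | succ l =>
    have := hKpos hξ; have := bb_pos hξ l
    unfold aaT; positivity

lemma aa_pos (n : ℕ) : 0 < aa ξ n := by
  have h1 := aaT_pos hξ n
  have h2 := bb_pos hξ n
  have h3 := hKpos hξ
  unfold aa; positivity

lemma aaT_le_aa (n : ℕ) : aaT ξ n ≤ aa ξ n := by
  have h2 := bb_pos hξ n
  have h3 := hKpos hξ
  unfold aa
  nlinarith [inv_pos.2 (pow_pos h3 (2*n+1))]

lemma kk_zero : kk ξ 0 = 1 := by norm_num [kk]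

lemma R1 (n : ℕ) : kk ξ n = (Kc ξ) ^ (2 * n + 1) * kk ξ (n + 1) := by
  have hK := hKpos hξ
  have he : (n + 1) ^ 2 = n ^ 2 + (2 * n + 1) := by ring
  have hsplit : Kc ξ ^ ((n+1)^2) = Kc ξ ^ (n^2) * Kc ξ ^ (2*n+1) := by
    rw [he, pow_add]
  unfold kk
  rw [hsplit, mul_inv, mul_comm ((Kc ξ ^ n ^ 2)⁻¹), ← mul_assoc,
     mul_inv_cancel₀ (by positivity), one_mul]

lemma R2 (n : ℕ) : bb ξ (n + 1) = bb ξ n * (4096 * (Kc ξ) ^ (4 * n + 2)) := by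
  have he : 2 * (n + 1) ^ 2 = 2 * n ^ 2 + (4 * n + 2) := by ring
  unfold bb
  rw [he, pow_add, pow_succ]
  ring

lemma C2 (l : ℕ) : aaT ξ (l + 1) * kk ξ (l + 1) = bb ξ l * kk ξ l := by
  rw [R1 hξ l]
  unfold aaT
  ring

lemma C0 (l : ℕ) : aa ξ l * kk ξ l = aaT ξ l * kk ξ l + bb ξ l * kk ξ (l + 1) := by
  have hK := hKpos hξ
  have h : ((Kc ξ) ^ (2 * l + 1))⁻¹ * kk ξ l = kk ξ (l + 1) := by
    rw [R1 hξ l]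
    field_simp
  unfold aa
  calc (aaT ξ l + bb ξ l * ((Kc ξ) ^ (2 * l + 1))⁻¹) * kk ξ l
      = aaT ξ l * kk ξ l + bb ξ l * (((Kc ξ) ^ (2 * l + 1))⁻¹ * kk ξ l) := by ring
    _ = aaT ξ l * kk ξ l + bb ξ l * kk ξ (l + 1) := by rw [h]

lemma bb_zero : bb ξ 0 = 64 / ξ := by norm_num [bb]

lemma bb_mono_one (n : ℕ) : bb ξ n ≤ bb ξ (n + 1) := by
  rw [R2 hξ n]
  have h1 := bb_pos hξ n
  have h2 : (1:ℝ) ≤ 4096 * (Kc ξ) ^ (4 * n + 2) := by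
    have : (1:ℝ) ≤ Kc ξ ^ (4*n+2) := one_le_pow₀ (le_trans (by norm_num) (hK1 hξ))
    nlinarith
  nlinarith

lemma bb_ge (n : ℕ) : 64 / ξ ≤ bb ξ n := by
  induction n with
  | zero => rw [bb_zero hξ]
  | succ k ih => exact le_trans ih (bb_mono_one hξ k)

lemma lam_pos : 0 < lam ξ := lt_min (by linarith) (by positivity)

lemma lam_le_half_xi : lam ξ ≤ ξ / 2 := min_le_left _ _

lemma lam_le_bb (n : ℕ) : lam ξ ≤ bb ξ n :=
  le_trans (min_le_right _ _) (bb_ge hξ n)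

/-- The basic Young-type inequality. -/
lemma young {c u v : ℝ} (hu : 0 ≤ u) (hv : 0 ≤ v) (h : c ^ 2 ≤ 4 * u * v) (x y : ℝ) :
    c * (x * y) ≤ u * x ^ 2 + v * y ^ 2 := by
  rcases eq_or_lt_of_le hu with h0 | hu'
  · have hc : c = 0 := by nlinarith
    rw [hc, ← h0]; nlinarith
  · nlinarith [sq_nonneg (2 * u * x - c * y), sq_nonneg y]

lemma A1 : (aa ξ 0) ^ 2 ≤ 4 * ((ξ / 2) / 8) * (bb ξ 0 / 8) := by
  have hK := hKpos hξ
  have h4 : (4096:ℝ) ≤ ξ * Kc ξ := hKxi hξ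
  have haa : aa ξ 0 = 1/2 + (64 / ξ) * (Kc ξ)⁻¹ := by
    simp [aa, aaT, bb_zero hξ, bb]
  have hb : (64 / ξ) * (Kc ξ)⁻¹ ≤ 1 / 64 := by
    rw [div_mul_eq_mul_div, div_le_div_iff₀ (by positivity) (by norm_num)]
    have h5 : (4096:ℝ) * (Kc ξ)⁻¹ ≤ (ξ * Kc ξ) * (Kc ξ)⁻¹ :=
      mul_le_mul_of_nonneg_right h4 (by positivity)
    have h6 : (ξ * Kc ξ) * (Kc ξ)⁻¹ = ξ := by field_simp
    calc (64:ℝ) * (Kc ξ)⁻¹ * 64 = 4096 * (Kc ξ)⁻¹ := by ring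
      _ ≤ (ξ * Kc ξ) * (Kc ξ)⁻¹ := h5
      _ = 1 * ξ := by field_simp
  have hnn : 0 ≤ (64 / ξ) * (Kc ξ)⁻¹ := by positivity
  have hbb0 : (64:ℝ)/ξ = bb ξ 0 := (bb_zero hξ).symm
  have key : 4 * ((ξ / 2) / 8) * (bb ξ 0 / 8) = 2 := by
    rw [← hbb0]; field_simp; ring
  rw [key, haa]
  nlinarith

lemma hKxiR : 4096 * ξ ≤ Kc ξ := by
  have h3 : 0 < ξ⁻¹ := inv_pos.2 hξ
  have h : ξ⁻¹ * ξ = 1 := inv_mul_cancel₀ (ne_of_gt hξ)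
  unfold Kc; nlinarith

lemma half_le_aaT (n : ℕ) : (1:ℝ)/2 ≤ aaT ξ n := by
  cases n with
  | zero => simp [aaT]
  | succ l =>
    have hKp := hKpos hξ
    have h1 : (64:ℝ)/ξ ≤ bb ξ l := bb_ge hξ l
    have h2 : Kc ξ ^ 1 ≤ Kc ξ ^ (2*l+1) :=
      pow_le_pow_right₀ (le_trans (by norm_num) (hK1 hξ)) (by omega)
    have h3 : 4096 * ξ ≤ Kc ξ := hKxiR hξ
    have h4 : (64/ξ) * (4096 * ξ) ≤ bb ξ l * Kc ξ ^ (2*l+1) := by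
      apply mul_le_mul h1 (by simpa using le_trans h3 (by simpa using h2)) (by positivity)
        (le_of_lt (bb_pos hξ l))
    have h5 : (64/ξ) * (4096*ξ) = 64*4096 := by field_simp
    unfold aaT
    nlinarith

lemma half_le_aa (n : ℕ) : (1:ℝ)/2 ≤ aa ξ n :=
  le_trans (half_le_aaT hξ n) (aaT_le_aa hξ n)

lemma A2 (l : ℕ) : (aa ξ (l+1)) ^ 2 ≤ 4 * (bb ξ l / 8) * (bb ξ (l+1) / 8) := by
  have hKp := hKpos hξ
  have hK4 := hK1 hξ
  have hBp := bb_pos hξ l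
  have e1 : aa ξ (l+1) = bb ξ l * Kc ξ^(2*l+1) + bb ξ (l+1) * (Kc ξ^(2*l+3))⁻¹ := by
    show aaT ξ (l+1) + _ = _
    have : 2*(l+1)+1 = 2*l+3 := by omega
    rw [this]; rfl
  have hpow : Kc ξ^(4*l+2) * 4096 ≤ Kc ξ^(2*l+3) * Kc ξ^(2*l+1) := by
    have h1 : Kc ξ^(2*l+3) * Kc ξ^(2*l+1) = Kc ξ^(4*l+2) * Kc ξ^2 := by
      rw [← pow_add, ← pow_add]; congr 1; omega
    rw [h1]
    have h2 : (4096:ℝ) ≤ Kc ξ^2 := by nlinarith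
    nlinarith [pow_pos hKp (4*l+2)]
  have hsec : bb ξ (l+1) * (Kc ξ^(2*l+3))⁻¹ ≤ bb ξ l * Kc ξ^(2*l+1) := by
    rw [R2 hξ l]
    rw [mul_inv_le_iff₀ (pow_pos hKp (2*l+3))]
    calc bb ξ l * (4096 * Kc ξ ^ (4*l+2)) = bb ξ l * (Kc ξ^(4*l+2) * 4096) := by ring
      _ ≤ bb ξ l * (Kc ξ^(2*l+3) * Kc ξ^(2*l+1)) := by
          exact mul_le_mul_of_nonneg_left hpow (le_of_lt hBp)
      _ = bb ξ l * Kc ξ^(2*l+1) * Kc ξ^(2*l+3) := by ring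
  have haa : aa ξ (l+1) ≤ 2 * (bb ξ l * Kc ξ^(2*l+1)) := by rw [e1]; linarith
  have haapos := aa_pos hξ (l+1)
  have hrhs : 4 * (bb ξ l / 8) * (bb ξ (l+1) / 8) = 256 * (bb ξ l * Kc ξ^(2*l+1))^2 := by
    rw [R2 hξ l]
    have h3 : Kc ξ^(4*l+2) = Kc ξ^(2*l+1) * Kc ξ^(2*l+1) := by
      rw [← pow_add]; congr 1; omega
    rw [h3]; ring
  rw [hrhs]
  nlinarith [mul_pos hBp (pow_pos hKp (2*l+1))]

lemma A3 : (bb ξ 0) ^ 2 ≤ 4 * ((ξ/2) / 8) * (bb ξ 1 / 8) := by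
  have hKp := hKpos hξ
  have h3 : 4096 * ξ ≤ Kc ξ := hKxiR hξ  -- not quite what we need
  have hK2 : (4096:ℝ) ≤ ξ * Kc ξ := hKxi hξ
  have e0 : bb ξ 0 = 64/ξ := bb_zero hξ
  have e1 : bb ξ 1 = bb ξ 0 * (4096 * Kc ξ^2) := by
    have := R2 hξ 0; norm_num at this; exact this
  rw [e0, e1, e0]
  have key : 4 * ((ξ/2)/8) * ((64/ξ) * (4096 * Kc ξ^2) / 8) = 8192 * Kc ξ^2 := by
    field_simp; ring
  rw [key]
  have h64 : (64/ξ)^2 = 4096 / ξ^2 := by field_simp; ring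
  rw [h64]
  rw [div_le_iff₀ (by positivity)]
  have hq : 4096 * 4096 ≤ (ξ * Kc ξ) * (ξ * Kc ξ) :=
    mul_le_mul hK2 hK2 (by norm_num) (by positivity)
  nlinarith [sq_nonneg (Kc ξ)]

lemma A4 (l : ℕ) : (bb ξ (l+1)) ^ 2 ≤ 4 * (bb ξ l / 8) * (bb ξ (l+2) / 8) := by
  have hKp := hKpos hξ
  have hK4 := hK1 hξ
  have hBp := bb_pos hξ l
  have e1 := R2 hξ l
  have e2 := R2 hξ (l+1)
  have hKK : Kc ξ^(4*(l+1)+2) = Kc ξ^(4*l+2) * Kc ξ^4 := by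
    have he : 4*(l+1)+2 = (4*l+2)+4 := by omega
    rw [he, pow_add]
  rw [e2, e1, hKK]
  have hq1 : (4096:ℝ)*4096 ≤ Kc ξ * Kc ξ := mul_le_mul hK4 hK4 (by norm_num) (by positivity)
  have hq2 : (16:ℝ) ≤ Kc ξ * Kc ξ := by nlinarith
  have hq3 : (1:ℝ) ≤ Kc ξ * Kc ξ := by nlinarith
  have hK16 : (16:ℝ) ≤ Kc ξ ^ 4 := by nlinarith [mul_le_mul hq2 hq3 (by norm_num) (by linarith)]
  have hp := pow_pos hKp (4*l+2)
  have hmain : (bb ξ l * (4096 * Kc ξ^(4*l+2)))^2 * 16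
      ≤ (bb ξ l * (4096 * Kc ξ^(4*l+2)))^2 * Kc ξ^4 :=
    mul_le_mul_of_nonneg_left hK16 (sq_nonneg _)
  nlinarith [sq_nonneg (bb ξ l * (4096 * Kc ξ^(4*l+2)))]

lemma PD1 : 16 * (bb ξ 0)^2 ≤ aa ξ 0 * aaT ξ 1 := by
  have hKp := hKpos hξ
  have hb0 : bb ξ 0 = 64/ξ := bb_zero hξ
  have haaT1 : aaT ξ 1 = bb ξ 0 * Kc ξ ^ 1 := rfl
  have h1 : (1:ℝ)/2 ≤ aa ξ 0 := half_le_aa hξ 0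
  have hK2 : (4096:ℝ) ≤ ξ * Kc ξ := hKxi hξ
  have hbb : 0 < bb ξ 0 := bb_pos hξ 0
  have key : 32 * bb ξ 0 ≤ Kc ξ := by
    rw [hb0]
    have h32 : 32 * (64/ξ) = 2048 / ξ := by ring
    rw [h32, div_le_iff₀ hξ]
    calc (2048:ℝ) ≤ 4096 := by norm_num
      _ ≤ ξ * Kc ξ := hK2
      _ = Kc ξ * ξ := mul_comm _ _
  have t1 : (1/2) * (32 * bb ξ 0) ≤ aa ξ 0 * Kc ξ :=
    mul_le_mul h1 key (by positivity) (le_of_lt (aa_pos hξ 0))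
  have t2 : ((1/2) * (32 * bb ξ 0)) * bb ξ 0 ≤ (aa ξ 0 * Kc ξ) * bb ξ 0 :=
    mul_le_mul_of_nonneg_right t1 (le_of_lt hbb)
  calc 16 * (bb ξ 0)^2 = ((1/2) * (32 * bb ξ 0)) * bb ξ 0 := by ring
    _ ≤ (aa ξ 0 * Kc ξ) * bb ξ 0 := t2
    _ = aa ξ 0 * aaT ξ 1 := by rw [haaT1]; ring

lemma PD2 (l : ℕ) : 16 * (bb ξ (l+1))^2 ≤ aa ξ (l+1) * aaT ξ (l+2) := by
  have hKp := hKpos hξ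
  have hK4 := hK1 hξ
  have hBp := bb_pos hξ l
  have hB1p := bb_pos hξ (l+1)
  have h1 : bb ξ l * Kc ξ^(2*l+1) ≤ aa ξ (l+1) := aaT_le_aa hξ (l+1)
  have haaT2 : aaT ξ (l+2) = bb ξ (l+1) * Kc ξ^(2*(l+1)+1) := rfl
  have h2 : 2*(l+1)+1 = 2*l+3 := by omega
  have hprod : (bb ξ l * Kc ξ^(2*l+1)) * (bb ξ (l+1) * Kc ξ^(2*l+3)) ≤ aa ξ (l+1) * aaT ξ (l+2) := by
    rw [haaT2, h2]
    apply mul_le_mul_of_nonneg_right h1 (by positivity)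
  have he : (2*l+1)+(2*l+3) = (4*l+2)+2 := by omega
  have hexp : Kc ξ^(2*l+1) * Kc ξ^(2*l+3) = Kc ξ^(4*l+2) * Kc ξ^2 := by
    rw [← pow_add, he, pow_add]
  have hKsq : 16 * 4096 ≤ Kc ξ^2 := by nlinarith
  calc 16 * (bb ξ (l+1))^2 = 16 * (bb ξ (l+1) * (bb ξ l * (4096 * Kc ξ^(4*l+2)))) := by
        rw [R2 hξ l]; ring
    _ ≤ bb ξ (l+1) * (bb ξ l * (Kc ξ^(4*l+2) * Kc ξ^2)) := by
        nlinarith [mul_pos hBp (pow_pos hKp (4*l+2)), mul_pos hB1p (mul_pos hBp (pow_pos hKp (4*l+2)))]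
    _ = (bb ξ l * Kc ξ^(2*l+1)) * (bb ξ (l+1) * Kc ξ^(2*l+3)) := by rw [← hexp]; ring
    _ ≤ aa ξ (l+1) * aaT ξ (l+2) := hprod

end Arith

/-! ### The weight function for rows -/

def gg (ξ : ℝ) : ℕ → ℝ
  | 0 => ξ / 2
  | (n + 1) => bb ξ n

section Arith2
include hξ

lemma gg_nonneg (n : ℕ) : 0 ≤ gg ξ n := by
  cases n with
  | zero => show (0:ℝ) ≤ ξ/2; linarith
  | succ k => exact le_of_lt (bb_pos hξ k)

lemma lam_le_gg (n : ℕ) : lam ξ ≤ gg ξ n := by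
  cases n with
  | zero => exact lam_le_half_xi hξ
  | succ k => exact lam_le_bb hξ k

lemma youngA (l : ℕ) : (aa ξ l) ^ 2 ≤ 4 * (gg ξ l / 8) * (gg ξ (l+1) / 8) := by
  cases l with
  | zero => exact A1 hξ
  | succ k => exact A2 hξ k

lemma youngB (l : ℕ) : (bb ξ l) ^ 2 ≤ 4 * (gg ξ l / 8) * (gg ξ (l+2) / 8) := by
  cases l with
  | zero => exact A3 hξ
  | succ k => exact A4 hξ k

/-- The key per-column scalar estimate. -/
lemma claim {r : ℕ} (hr : 0 < r) (u : ℕ → ℝ) (hu : ∀ n, r ≤ n → u n = 0) :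
    (∑ l ∈ Finset.range r, aa ξ l * (u l * u (l+1)))
      - (∑ l ∈ Finset.range r, bb ξ l * (u (l+1))^2)
      - (∑ l ∈ Finset.range r, bb ξ l * (u l * u (l+2)))
      - (ξ/2) * (u 0)^2
    ≤ -(lam ξ / 2) * ∑ l ∈ Finset.range r, (u l)^2 := by
  set F : ℕ → ℝ := fun n => gg ξ n / 8 * (u n)^2 with hF
  have hFnn : ∀ n, 0 ≤ F n := fun n => by
    have := gg_nonneg hξ n; positivity
  have hFr : F r = 0 := by simp [hF, hu r le_rfl]
  have hFr1 : F (r+1) = 0 := by simp [hF, hu (r+1) (by omega)]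
  have hshift1 : ∑ l ∈ Finset.range r, F (l+1) ≤ ∑ l ∈ Finset.range r, F l := by
    have h1 : ∑ l ∈ Finset.range (r+1), F l = (∑ l ∈ Finset.range r, F (l+1)) + F 0 :=
      Finset.sum_range_succ' F r
    have h2 : ∑ l ∈ Finset.range (r+1), F l = (∑ l ∈ Finset.range r, F l) + F r :=
      Finset.sum_range_succ F r
    have := hFnn 0
    rw [hFr] at h2; linarith
  have hshift2 : ∑ l ∈ Finset.range r, F (l+2) ≤ ∑ l ∈ Finset.range r, F l := by
    have key : ∑ l ∈ Finset.range r, F (l+2) ≤ ∑ l ∈ Finset.range r, F (l+1) := by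
      have h1 : ∑ l ∈ Finset.range (r+1), F (l+1) = (∑ l ∈ Finset.range r, F (l+1+1)) + F 1 :=
        Finset.sum_range_succ' (fun n => F (n+1)) r
      have h2 : ∑ l ∈ Finset.range (r+1), F (l+1) = (∑ l ∈ Finset.range r, F (l+1)) + F (r+1) :=
        Finset.sum_range_succ (fun n => F (n+1)) r
      have := hFnn 1
      rw [hFr1] at h2
      have h3 : ∀ l, F (l+1+1) = F (l+2) := fun l => by norm_num
      simp only [h3] at h1
      linarith
    exact le_trans key hshift1
  have S1 : (∑ l ∈ Finset.range r, aa ξ l * (u l * u (l+1)))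
      ≤ (∑ l ∈ Finset.range r, F l) + ∑ l ∈ Finset.range r, F (l+1) := by
    rw [← Finset.sum_add_distrib]
    apply Finset.sum_le_sum
    intro l _
    exact young hξ (by have := gg_nonneg hξ l; positivity)
      (by have := gg_nonneg hξ (l+1); positivity) (youngA hξ l) _ _
  have S2 : -(∑ l ∈ Finset.range r, bb ξ l * (u l * u (l+2)))
      ≤ (∑ l ∈ Finset.range r, F l) + ∑ l ∈ Finset.range r, F (l+2) := by
    rw [← Finset.sum_add_distrib, ← Finset.sum_neg_distrib]
    apply Finset.sum_le_sum
    intro l _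
    have hsq : (-(bb ξ l))^2 ≤ 4 * (gg ξ l / 8) * (gg ξ (l+2) / 8) := by
      have := youngB hξ l; nlinarith [this]
    have := young hξ (by have := gg_nonneg hξ l; positivity)
      (by have := gg_nonneg hξ (l+2); positivity) hsq (u l) (u (l+2))
    simp only [hF]
    linarith [this]
  have hgood : ∑ l ∈ Finset.range r, bb ξ l * (u (l+1))^2
      = (∑ l ∈ Finset.range r, gg ξ l * (u l)^2) - (ξ/2) * (u 0)^2 := by
    set H : ℕ → ℝ := fun n => gg ξ n * (u n)^2 with hH
    have h0 : ∀ l, bb ξ l * (u (l+1))^2 = H (l+1) := fun l => rfl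
    simp only [h0]
    have h1 : ∑ l ∈ Finset.range (r+1), H l = (∑ l ∈ Finset.range r, H (l+1)) + H 0 :=
      Finset.sum_range_succ' H r
    have h2 : ∑ l ∈ Finset.range (r+1), H l = (∑ l ∈ Finset.range r, H l) + H r :=
      Finset.sum_range_succ H r
    have hHr : H r = 0 := by simp [hH, hu r le_rfl]
    have hH0 : H 0 = (ξ/2) * (u 0)^2 := rfl
    rw [hHr] at h2
    rw [hH0] at h1
    linarith
  have hfinal : (lam ξ / 2) * ∑ l ∈ Finset.range r, (u l)^2
      ≤ ∑ l ∈ Finset.range r, (gg ξ l * (u l)^2 - 4 * F l) := by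
    rw [Finset.mul_sum]
    apply Finset.sum_le_sum
    intro l _
    have h1 : lam ξ ≤ gg ξ l := lam_le_gg hξ l
    have h2 : 0 ≤ (u l)^2 := sq_nonneg _
    have : gg ξ l * (u l)^2 - 4 * F l = (gg ξ l / 2) * (u l)^2 := by
      simp only [hF]; ring
    rw [this]
    have : lam ξ / 2 ≤ gg ξ l / 2 := by linarith
    exact mul_le_mul_of_nonneg_right this h2
  have hsplit : ∑ l ∈ Finset.range r, (gg ξ l * (u l)^2 - 4 * F l)
      = (∑ l ∈ Finset.range r, gg ξ l * (u l)^2) - 4 * ∑ l ∈ Finset.range r, F l := by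
    rw [Finset.sum_sub_distrib, ← Finset.mul_sum]
  rw [hgood]
  rw [hsplit] at hfinal
  have := hshift1; have := hshift2
  nlinarith [S1, S2, hfinal, hshift1, hshift2]

end Arith2

/-! ### The matrix -/

def mext (r : ℕ) (m : Fin r → ℕ) (n : ℕ) : ℕ := if hn : n < r then m ⟨n, hn⟩ else 0

def dd (ξ : ℝ) (r : ℕ) (m : Fin r → ℕ) (l i : ℕ) : ℝ :=
  if i < 2 * mext r m l then (if i < 2 * mext r m (l+1) then aa ξ l else aaT ξ l) else 1

def bc (ξ : ℝ) (r : ℕ) (m : Fin r → ℕ) (l i : ℕ) : ℝ :=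
  if i < 2 * mext r m (l+1) then -(bb ξ l) else 0

def Sc (ξ : ℝ) (r : ℕ) (m : Fin r → ℕ) (l l' i : ℕ) : ℝ :=
  (if l' = l then dd ξ r m l i else 0) + (if l' = l + 1 then bc ξ r m l i else 0)
    + (if l = l' + 1 then bc ξ r m l' i else 0)

def Smat (ξ : ℝ) (r h : ℕ) (m : Fin r → ℕ) :
    Matrix (Fin r × Fin (2 * h)) (Fin r × Fin (2 * h)) ℝ :=
  fun p q => if (p.2 : ℕ) = (q.2 : ℕ) then Sc ξ r m (p.1 : ℕ) (q.1 : ℕ) (p.2 : ℕ) else 0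

section Struct

variable {r : ℕ} {m : Fin r → ℕ}

lemma mext_anti (hm : Antitone m) {n n' : ℕ} (hnn : n ≤ n') :
    mext r m n' ≤ mext r m n := by
  unfold mext
  by_cases h1 : n' < r
  · have h2 : n < r := lt_of_le_of_lt hnn h1
    rw [dif_pos h1, dif_pos h2]
    exact hm (show (⟨n, h2⟩ : Fin r) ≤ ⟨n', h1⟩ from hnn)
  · rw [dif_neg h1]
    exact Nat.zero_le _

lemma alive_mono (hm : Antitone m) {l i : ℕ} (hi : i < 2 * mext r m (l+1)) :
    i < 2 * mext r m l :=
  lt_of_lt_of_le hi (by have := mext_anti hm (show l ≤ l + 1 by omega); omega)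

lemma alive_lt (hm : Antitone m) {l l' i : ℕ} (hll : l ≤ l') (hi : i < 2 * mext r m l') :
    i < 2 * mext r m l :=
  lt_of_lt_of_le hi (by have := mext_anti hm hll; omega)

lemma alive_lt_r {l i : ℕ} (hi : i < 2 * mext r m l) : l < r := by
  by_contra hc
  rw [mext, dif_neg hc] at hi
  omega

lemma Sc_symm (ξ : ℝ) (l l' i : ℕ) : Sc ξ r m l l' i = Sc ξ r m l' l i := by
  unfold Sc
  by_cases h1 : l' = l
  · subst h1; rfl
  · by_cases h2 : l' = l + 1
    · subst h2
      have hne : ¬(l = l + 1) := by omega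
      have hne2 : ¬(l = l + 1 + 1) := by omega
      have hne3 : ¬(l + 1 = l) := by omega
      simp [hne, hne2, hne3]
    · by_cases h3 : l = l' + 1
      · subst h3
        have hne : ¬(l' = l' + 1) := by omega
        have hne2 : ¬(l' = l' + 1 + 1) := by omega
        have hne3 : ¬(l' + 1 = l') := by omega
        simp [hne, hne2, hne3]
      · have h4 : ¬(l = l') := fun hc => h1 hc.symm
        have h5 : ¬(l = l' + 1) := h3
        have h6 : ¬(l' = l + 1) := h2
        simp [h1, h4, h5, h6]

variable (hξ : 0 < ξ)
include hξ

lemma dd_ge_half (l i : ℕ) : (1:ℝ)/2 ≤ dd ξ r m l i := by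
  unfold dd
  split_ifs
  · exact half_le_aa hξ l
  · exact half_le_aaT hξ l
  · norm_num

lemma dd_pos (l i : ℕ) : 0 < dd ξ r m l i := lt_of_lt_of_le (by norm_num) (dd_ge_half hξ l i)

lemma bc_cond (hm : Antitone m) (l i : ℕ) :
    (2 * bc ξ r m l i) ^ 2 ≤ 4 * (dd ξ r m l i / 4) * (dd ξ r m (l+1) i / 4) := by
  unfold bc
  split_ifs with hal
  · -- alive (l+1): dd l = aa l, dd (l+1) ≥ aaT (l+1)
    have hall : i < 2 * mext r m l := alive_mono hm hal
    have hdl : dd ξ r m l i = aa ξ l := by unfold dd; rw [if_pos hall, if_pos hal]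
    have hdl1 : aaT ξ (l+1) ≤ dd ξ r m (l+1) i := by
      unfold dd
      rw [if_pos hal]
      split_ifs
      · exact aaT_le_aa hξ (l+1)
      · exact le_refl _
    have hPD : 16 * (bb ξ l)^2 ≤ aa ξ l * aaT ξ (l+1) := by
      cases l with
      | zero => exact PD1 hξ
      | succ k => exact PD2 hξ k
    have h1 : aa ξ l * aaT ξ (l+1) ≤ dd ξ r m l i * dd ξ r m (l+1) i := by
      rw [hdl]
      exact mul_le_mul_of_nonneg_left hdl1 (le_of_lt (aa_pos hξ l))
    nlinarith [hPD, h1, sq_nonneg (bb ξ l)]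
  · have h1 := dd_pos hξ (r := r) (m := m) l i
    have h2 := dd_pos hξ (r := r) (m := m) (l+1) i
    nlinarith

end Struct

section Struct2

variable {r : ℕ} {m : Fin r → ℕ}
include hξ

/-- Per-column positive-definiteness estimate. -/
lemma pdclaim (hm : Antitone m) (i : ℕ) (v : ℕ → ℝ) (hv : ∀ n, r ≤ n → v n = 0) :
    (1/4) * ∑ l ∈ Finset.range r, (v l)^2
      ≤ (∑ l ∈ Finset.range r, dd ξ r m l i * (v l)^2)
        + 2 * ∑ l ∈ Finset.range r, bc ξ r m l i * (v l * v (l+1)) := by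
  set D : ℕ → ℝ := fun n => dd ξ r m n i / 4 * (v n)^2 with hD
  have hDnn : ∀ n, 0 ≤ D n := fun n => by
    have := dd_pos hξ (r := r) (m := m) n i; positivity
  have hDr : D r = 0 := by simp [hD, hv r le_rfl]
  have hshift : ∑ l ∈ Finset.range r, D (l+1) ≤ ∑ l ∈ Finset.range r, D l := by
    have h1 : ∑ l ∈ Finset.range (r+1), D l = (∑ l ∈ Finset.range r, D (l+1)) + D 0 :=
      Finset.sum_range_succ' D r
    have h2 : ∑ l ∈ Finset.range (r+1), D l = (∑ l ∈ Finset.range r, D l) + D r :=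
      Finset.sum_range_succ D r
    have := hDnn 0
    rw [hDr] at h2; linarith
  have step : ∑ l ∈ Finset.range r, (-(D l) - D (l+1))
      ≤ ∑ l ∈ Finset.range r, 2 * (bc ξ r m l i * (v l * v (l+1))) := by
    apply Finset.sum_le_sum
    intro l _
    have hy := young hξ (u := dd ξ r m l i / 4) (v := dd ξ r m (l+1) i / 4)
      (c := -(2 * bc ξ r m l i))
      (by have := dd_pos hξ (r := r) (m := m) l i; positivity)
      (by have := dd_pos hξ (r := r) (m := m) (l+1) i; positivity)
      (by have := bc_cond hξ hm (l := l) (i := i); nlinarith) (v l) (v (l+1))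
    simp only [hD]
    linarith
  have hsum1 : ∑ l ∈ Finset.range r, (-(D l) - D (l+1))
      = -(∑ l ∈ Finset.range r, D l) - ∑ l ∈ Finset.range r, D (l+1) := by
    rw [Finset.sum_sub_distrib, Finset.sum_neg_distrib]
  have hsum2 : ∑ l ∈ Finset.range r, 2 * (bc ξ r m l i * (v l * v (l+1)))
      = 2 * ∑ l ∈ Finset.range r, bc ξ r m l i * (v l * v (l+1)) := by
    rw [Finset.mul_sum]
  have hdd : ∀ l ∈ Finset.range r, (1/4) * (v l)^2 ≤ dd ξ r m l i * (v l)^2 - 2 * D l := by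
    intro l _
    have h1 := dd_ge_half hξ (r := r) (m := m) l i
    have h2 : dd ξ r m l i * (v l)^2 - 2 * D l = (dd ξ r m l i / 2) * (v l)^2 := by
      simp only [hD]; ring
    rw [h2]
    exact mul_le_mul_of_nonneg_right (by linarith) (sq_nonneg _)
  have hdds : ∑ l ∈ Finset.range r, ((1/4) * (v l)^2)
      ≤ ∑ l ∈ Finset.range r, (dd ξ r m l i * (v l)^2 - 2 * D l) := Finset.sum_le_sum hdd
  rw [Finset.sum_sub_distrib] at hdds
  have h2D : ∑ x ∈ Finset.range r, 2 * D x = 2 * ∑ x ∈ Finset.range r, D x :=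
    (Finset.mul_sum _ _ _).symm
  rw [h2D, ← Finset.mul_sum] at hdds
  rw [hsum1, hsum2] at step
  linarith

/-- The exact cancellation property of the matrix against the gains. -/
lemma canc (hm : Antitone m) {l' i : ℕ} (hl' : i < 2 * mext r m l') :
    ∑ l ∈ Finset.range r, (if i < 2 * mext r m l then kk ξ l * Sc ξ r m l l' i else 0)
      = if l' = 0 then 1/2 else 0 := by
  have hl'r : l' < r := alive_lt_r hl'
  have hsplit : ∀ l, (if i < 2 * mext r m l then kk ξ l * Sc ξ r m l l' i else 0)
      = (if i < 2 * mext r m l then kk ξ l * (if l' = l then dd ξ r m l i else 0) else 0)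
        + (if i < 2 * mext r m l then kk ξ l * (if l' = l + 1 then bc ξ r m l i else 0) else 0)
        + (if i < 2 * mext r m l then kk ξ l * (if l = l' + 1 then bc ξ r m l' i else 0) else 0) := by
    intro l
    unfold Sc
    split_ifs <;> ring
  simp only [hsplit]
  rw [Finset.sum_add_distrib, Finset.sum_add_distrib]
  have e1 : ∀ l, (if i < 2 * mext r m l then kk ξ l * (if l' = l then dd ξ r m l i else 0) else 0)
      = if l = l' then kk ξ l' * dd ξ r m l' i else 0 := by
    intro l
    by_cases hc : l = l'
    · subst hc
      rw [if_pos hl', if_pos rfl, if_pos rfl]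
    · rw [if_neg (fun hcc : l' = l => hc hcc.symm), if_neg hc]
      split_ifs <;> ring
  have e2 : ∀ l, (if i < 2 * mext r m l then kk ξ l * (if l' = l + 1 then bc ξ r m l i else 0) else 0)
      = if l = l' - 1 then (if l' = 0 then 0 else -(kk ξ (l'-1) * bb ξ (l'-1))) else 0 := by
    intro l
    by_cases hc : l' = l + 1
    · have h1 : l = l' - 1 := by omega
      have h0 : ¬(l' = 0) := by omega
      have hal : i < 2 * mext r m l := alive_lt hm (by omega) hl'
      have hbc : bc ξ r m l i = -(bb ξ l) := by
        unfold bc; rw [← hc, if_pos hl']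
      rw [if_pos hal, if_pos hc, if_pos h1, if_neg h0, hbc]
      have h2 : l' - 1 = l := by omega
      rw [h2]; ring
    · by_cases h2 : l = l' - 1
      · have h0 : l' = 0 := by omega
        rw [if_neg hc, if_pos h2, if_pos h0]
        split_ifs <;> ring
      · rw [if_neg hc, if_neg h2]
        split_ifs <;> ring
  have e3 : ∀ l, (if i < 2 * mext r m l then kk ξ l * (if l = l' + 1 then bc ξ r m l' i else 0) else 0)
      = if l = l' + 1 then kk ξ (l' + 1) * bc ξ r m l' i else 0 := by
    intro l
    by_cases hc : l = l' + 1
    · subst hc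
      rw [if_pos rfl, if_pos rfl]
      by_cases hal : i < 2 * mext r m (l' + 1)
      · rw [if_pos hal]
      · rw [if_neg hal]
        have hb : bc ξ r m l' i = 0 := by unfold bc; rw [if_neg hal]
        rw [hb]; ring
    · rw [if_neg hc, if_neg hc]
      split_ifs <;> ring
  simp only [e1, e2, e3]
  rw [Finset.sum_ite_eq' (Finset.range r) l', Finset.sum_ite_eq' (Finset.range r) (l'-1),
    Finset.sum_ite_eq' (Finset.range r) (l'+1)]
  rw [if_pos (Finset.mem_range.2 hl'r)]
  have hdd : dd ξ r m l' i = if i < 2 * mext r m (l'+1) then aa ξ l' else aaT ξ l' := by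
    unfold dd; rw [if_pos hl']
  by_cases h0 : l' = 0
  · subst h0
    rw [if_pos rfl]
    rw [if_pos (Finset.mem_range.2 (show 0 - 1 < r by omega)), if_pos rfl]
    rw [hdd, kk_zero hξ]
    by_cases hal : i < 2 * mext r m (0 + 1)
    · have h1r : 0 + 1 < r := alive_lt_r (m := m) hal
      rw [if_pos hal, if_pos (Finset.mem_range.2 h1r)]
      have hbc : bc ξ r m 0 i = -(bb ξ 0) := by unfold bc; rw [if_pos hal]
      rw [hbc]
      have hc0 := C0 hξ 0
      rw [kk_zero hξ] at hc0
      have haaT0 : aaT ξ 0 = 1/2 := rfl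
      rw [haaT0] at hc0
      -- hc0 : aa ξ 0 * 1 = 1/2 * 1 + bb ξ 0 * kk ξ 1
      linarith [hc0]
    · rw [if_neg hal]
      have hbc : bc ξ r m 0 i = 0 := by unfold bc; rw [if_neg hal]
      rw [hbc]
      have haaT0 : aaT ξ 0 = 1/2 := rfl
      rw [haaT0]
      split_ifs <;> ring
  · rw [if_neg h0, if_neg h0]
    obtain ⟨v, rfl⟩ : ∃ v, l' = v + 1 := ⟨l' - 1, by omega⟩
    have hv : v + 1 - 1 = v := by omega
    rw [hv]
    rw [if_pos (Finset.mem_range.2 (show v < r by omega))]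
    rw [hdd]
    have hc2 := C2 hξ v
    by_cases hal : i < 2 * mext r m (v + 1 + 1)
    · rw [if_pos hal]
      have hbc : bc ξ r m (v+1) i = -(bb ξ (v+1)) := by unfold bc; rw [if_pos hal]
      have hvr : v + 1 + 1 < r := alive_lt_r (m := m) hal
      rw [if_pos (Finset.mem_range.2 hvr), hbc]
      have hc0 := C0 hξ (v+1)
      linarith [hc0, hc2]
    · rw [if_neg hal]
      have hbc : bc ξ r m (v+1) i = 0 := by unfold bc; rw [if_neg hal]
      rw [hbc]
      split_ifs <;> linarith [hc2]

end Struct2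

lemma shift_sum {r : ℕ} (hr : 0 < r) (W : ℕ → ℝ) (hW : W (r-1) = 0) :
    ∑ n ∈ Finset.range r, (if n = 0 then 0 else W (n-1)) = ∑ n ∈ Finset.range r, W n := by
  obtain ⟨r', rfl⟩ : ∃ r', r = r' + 1 := ⟨r - 1, by omega⟩
  rw [Finset.sum_range_succ' (fun n => if n = 0 then 0 else W (n-1)) r']
  rw [Finset.sum_range_succ W r']
  simp only [Nat.add_sub_cancel] at hW ⊢
  rw [hW]
  simp

section Mat

variable {r h : ℕ} {m : Fin r → ℕ}

lemma Smat_herm : (Smat ξ r h m).IsHermitian := by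
  rw [Matrix.IsHermitian]
  ext p q
  simp only [Matrix.conjTranspose_apply, Smat, star_trivial]
  by_cases hpq : (q.2 : ℕ) = (p.2 : ℕ)
  · rw [if_pos hpq, if_pos hpq.symm, hpq, Sc_symm]
  · rw [if_neg hpq, if_neg (fun hc => hpq hc.symm)]

/-- Expansion of the quadratic form of `Smat` into columns. -/
lemma Smat_quad (x y : Fin r × Fin (2 * h) → ℝ) :
    dotProduct x ((Smat ξ r h m) *ᵥ y)
      = ∑ i : Fin (2 * h), ∑ l : Fin r, ∑ l' : Fin r,
          Sc ξ r m (l : ℕ) (l' : ℕ) (i : ℕ) * (x (l, i) * y (l', i)) := by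
  unfold dotProduct Matrix.mulVec Smat
  simp only [Fintype.sum_prod_type]
  rw [Finset.sum_comm]
  apply Finset.sum_congr rfl
  intro i _
  apply Finset.sum_congr rfl
  intro l _
  unfold dotProduct
  simp only [Fintype.sum_prod_type]
  rw [Finset.mul_sum]
  apply Finset.sum_congr rfl
  intro l' _
  rw [Finset.mul_sum]
  have hcollapse : ∀ j : Fin (2 * h),
      x (l, i) * ((if ((l, i).2 : ℕ) = ((l', j).2 : ℕ) then
          Sc ξ r m ((l, i).1 : ℕ) ((l', j).1 : ℕ) ((l, i).2 : ℕ) else 0) * y (l', j))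
      = if i = j then Sc ξ r m (l : ℕ) (l' : ℕ) (i : ℕ) * (x (l, i) * y (l', i)) else 0 := by
    intro j
    by_cases hij : i = j
    · subst hij
      rw [if_pos rfl, if_pos rfl]
      ring
    · rw [if_neg hij, if_neg (fun hc : (i : ℕ) = (j : ℕ) => hij (Fin.ext hc))]
      ring
  simp only [hcollapse]
  rw [Finset.sum_ite_eq (Finset.univ : Finset (Fin (2 * h))) i
      (fun j => Sc ξ r m (l : ℕ) (l' : ℕ) (i : ℕ) * (x (l, i) * y (l', i)))]
  rw [if_pos (Finset.mem_univ i)]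

/-- Row expansion of `Sc` against a vanishing-at-`r` sequence. -/
lemma Sc_row {i n : ℕ} (hn : n < r) (g : ℕ → ℝ) (hg : ∀ k, r ≤ k → g k = 0) :
    ∑ n' ∈ Finset.range r, Sc ξ r m n n' i * g n'
      = dd ξ r m n i * g n + bc ξ r m n i * g (n + 1)
        + (if n = 0 then 0 else bc ξ r m (n - 1) i * g (n - 1)) := by
  have hsplit : ∀ n', Sc ξ r m n n' i * g n'
      = (if n' = n then dd ξ r m n i * g n' else 0)
        + (if n' = n + 1 then bc ξ r m n i * g n' else 0)
        + (if n = n' + 1 then bc ξ r m n' i * g n' else 0) := by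
    intro n'
    unfold Sc
    split_ifs <;> ring
  simp only [hsplit]
  rw [Finset.sum_add_distrib, Finset.sum_add_distrib]
  rw [Finset.sum_ite_eq' (Finset.range r) n, Finset.sum_ite_eq' (Finset.range r) (n+1)]
  have e3 : ∀ n', (if n = n' + 1 then bc ξ r m n' i * g n' else 0)
      = if n' = n - 1 then (if n = 0 then 0 else bc ξ r m (n-1) i * g (n-1)) else 0 := by
    intro n'
    by_cases hc : n = n' + 1
    · have h1 : n' = n - 1 := by omega
      have h0 : ¬(n = 0) := by omega
      rw [if_pos hc, if_pos h1, if_neg h0, h1]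
    · by_cases h2 : n' = n - 1
      · have h0 : n = 0 := by omega
        rw [if_neg hc, if_pos h2, if_pos h0]
      · rw [if_neg hc, if_neg h2]
  simp only [e3]
  rw [Finset.sum_ite_eq' (Finset.range r) (n-1)]
  rw [if_pos (Finset.mem_range.2 hn)]
  by_cases hnr : n + 1 < r
  · rw [if_pos (Finset.mem_range.2 hnr), if_pos (Finset.mem_range.2 (by omega))]
  · rw [if_neg (fun hc => hnr (Finset.mem_range.1 hc)), hg (n+1) (by omega),
      if_pos (Finset.mem_range.2 (by omega))]
    ring

variable (hξ : 0 < ξ)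
include hξ

lemma Smat_posdef (hm : Antitone m) (hr : 0 < r) : (Smat ξ r h m).PosDef := by
  refine Matrix.PosDef.of_dotProduct_mulVec_pos Smat_herm ?_
  intro x hx
  have hstar : star x = x := star_trivial x
  rw [hstar, Smat_quad]
  -- per-column estimate
  have hper : ∀ i : Fin (2 * h),
      (1/4) * ∑ n ∈ Finset.range r, ((fun k => if hk : k < r then x (⟨k, hk⟩, i) else 0) n)^2
        ≤ ∑ l : Fin r, ∑ l' : Fin r,
            Sc ξ r m (l : ℕ) (l' : ℕ) (i : ℕ) * (x (l, i) * x (l', i)) := by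
    intro i
    set v : ℕ → ℝ := fun k => if hk : k < r then x (⟨k, hk⟩, i) else 0 with hv
    have hvr : ∀ k, r ≤ k → v k = 0 := by
      intro k hk; simp [hv, Nat.not_lt.2 hk]
    have hx1 : ∀ l : Fin r, x (l, i) = v (l : ℕ) := by
      intro l; simp [hv, l.isLt]
    have hrw : ∑ l : Fin r, ∑ l' : Fin r,
        Sc ξ r m (l : ℕ) (l' : ℕ) (i : ℕ) * (x (l, i) * x (l', i))
        = ∑ n ∈ Finset.range r, v n * (∑ n' ∈ Finset.range r, Sc ξ r m n n' (i : ℕ) * v n') := by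
      rw [← Fin.sum_univ_eq_sum_range (fun n => v n * (∑ n' ∈ Finset.range r, Sc ξ r m n n' (i : ℕ) * v n')) r]
      apply Finset.sum_congr rfl
      intro l _
      rw [← Fin.sum_univ_eq_sum_range (fun n' => Sc ξ r m (l : ℕ) n' (i : ℕ) * v n') r]
      rw [Finset.mul_sum]
      apply Finset.sum_congr rfl
      intro l' _
      rw [hx1 l, hx1 l']
      ring
    rw [hrw]
    have hrow : ∀ n ∈ Finset.range r, v n * (∑ n' ∈ Finset.range r, Sc ξ r m n n' (i : ℕ) * v n')
        = dd ξ r m n (i : ℕ) * (v n)^2 + bc ξ r m n (i : ℕ) * (v n * v (n+1))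
          + (if n = 0 then 0 else bc ξ r m (n-1) (i : ℕ) * (v (n-1) * v (n-1+1))) := by
      intro n hn
      rw [Sc_row (Finset.mem_range.1 hn) v hvr]
      split_ifs with hn0
      · ring
      · have he : n - 1 + 1 = n := by omega
        rw [he]
        ring
    rw [Finset.sum_congr rfl hrow, Finset.sum_add_distrib, Finset.sum_add_distrib]
    -- reindex the last sum
    have hW0 : bc ξ r m (r-1) (i : ℕ) * (v (r-1) * v (r-1+1)) = 0 := by
      have he : r - 1 + 1 = r := by omega
      rw [he, hvr r le_rfl]
      ring
    have hre : ∑ n ∈ Finset.range r, (if n = 0 then 0 else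
          bc ξ r m (n-1) (i : ℕ) * (v (n-1) * v (n-1+1)))
        = ∑ n ∈ Finset.range r, bc ξ r m n (i : ℕ) * (v n * v (n+1)) :=
      shift_sum hr (fun q => bc ξ r m q (i : ℕ) * (v q * v (q+1))) hW0
    rw [hre]
    have := pdclaim hξ hm (i : ℕ) v hvr
    linarith
  -- sum over columns
  have hsum : ∑ i : Fin (2 * h), ((1/4) * ∑ n ∈ Finset.range r,
        ((fun k => if hk : k < r then x (⟨k, hk⟩, i) else 0) n)^2)
      ≤ ∑ i : Fin (2 * h), ∑ l : Fin r, ∑ l' : Fin r,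
          Sc ξ r m (l : ℕ) (l' : ℕ) (i : ℕ) * (x (l, i) * x (l', i)) :=
    Finset.sum_le_sum (fun i _ => hper i)
  -- lower bound strictly positive
  obtain ⟨p, hp⟩ : ∃ p, x p ≠ 0 := Function.ne_iff.1 hx
  have hterm : ∀ i : Fin (2 * h), 0 ≤ (1/4) * ∑ n ∈ Finset.range r,
      ((fun k => if hk : k < r then x (⟨k, hk⟩, i) else 0) n)^2 := by
    intro i
    have : 0 ≤ ∑ n ∈ Finset.range r,
        ((fun k => if hk : k < r then x (⟨k, hk⟩, i) else 0) n)^2 :=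
      Finset.sum_nonneg (fun n _ => sq_nonneg _)
    linarith
  have hpos : 0 < (1/4) * ∑ n ∈ Finset.range r,
      ((fun k => if hk : k < r then x (⟨k, hk⟩, p.2) else 0) n)^2 := by
    have hmem : (p.1 : ℕ) ∈ Finset.range r := Finset.mem_range.2 p.1.isLt
    have hsingle : ((fun k => if hk : k < r then x (⟨k, hk⟩, p.2) else 0) (p.1 : ℕ))^2
        ≤ ∑ n ∈ Finset.range r, ((fun k => if hk : k < r then x (⟨k, hk⟩, p.2) else 0) n)^2 :=
      Finset.single_le_sum
        (f := fun n => ((fun k => if hk : k < r then x (⟨k, hk⟩, p.2) else 0) n)^2)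
        (fun n _ => sq_nonneg _) hmem
    have hval : (fun k => if hk : k < r then x (⟨k, hk⟩, p.2) else 0) (p.1 : ℕ) = x p := by
      simp [p.1.isLt]
    rw [hval] at hsingle
    have : 0 < (x p)^2 := by positivity
    linarith
  have htot : 0 < ∑ i : Fin (2 * h), ((1/4) * ∑ n ∈ Finset.range r,
      ((fun k => if hk : k < r then x (⟨k, hk⟩, i) else 0) n)^2) := by
    have := Finset.single_le_sum (fun i (_ : i ∈ Finset.univ) => hterm i) (Finset.mem_univ p.2)
    linarith
  linarith

end Mat

lemma dot_expand {n : Type*} [Fintype n] (M : Matrix n n ℝ) (x y : n → ℝ) :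
    dotProduct x (M *ᵥ y) = ∑ p, ∑ q, M p q * (x p * y q) := by
  simp only [dotProduct, Matrix.mulVec, Finset.mul_sum]
  apply Finset.sum_congr rfl
  intro p _
  apply Finset.sum_congr rfl
  intro q _
  ring

lemma projP_apply (h mm : ℕ) (v : Fin (2 * h) → ℝ) (i : Fin (2 * h)) :
    (Matrix.of fun i j : Fin (2 * h) => if i = j ∧ (i : ℕ) < 2 * mm then (1:ℝ) else 0).mulVec v i
      = if (i : ℕ) < 2 * mm then v i else 0 := by
  unfold Matrix.mulVec dotProduct
  have hpt : ∀ j : Fin (2 * h),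
      (Matrix.of fun i j : Fin (2 * h) => if i = j ∧ (i : ℕ) < 2 * mm then (1:ℝ) else 0) i j * v j
        = if i = j then (if (i : ℕ) < 2 * mm then v j else 0) else 0 := by
    intro j
    simp only [Matrix.of_apply]
    split_ifs with h1 h2 h3 h4
    · ring
    · exact absurd h1.2 h3
    · exact absurd h1.1 h2
    · exact absurd ⟨h4, by assumption⟩ h1
    · ring
    · ring
  simp only [hpt]
  rw [Finset.sum_ite_eq Finset.univ i (fun j => if (i : ℕ) < 2 * mm then v j else 0)]
  rw [if_pos (Finset.mem_univ i)]

end CLP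

/-- Proposition 1: for all positive `h, r₁`, every non-increasing sequence
`h ≥ m₁ ≥ … ≥ m_{r₁} ≥ 0` and every `ξ > 0`, there exist `λ > 0`, positive gains
`k̄₁, …, k̄_{r₁}` and a symmetric positive definite matrix `S` (of size `2hr₁`, indexed here by
`Fin r₁ × Fin (2h)`) such that along any solution `Y : [0,∞) → E^h_{m₁,…,m_{r₁}}` of
`Ẏ_l = Y_{l+1} − k̄_l p_l C⋆(t) Y₁` (with `Y_{r₁+1} = 0`), for any measurable symmetric
`C⋆` with `ξ Id ≤ C⋆(t) ≤ Id` a.e., one has `d/dt (Yᵀ S Y) ≤ −λ ‖Y‖²` a.e. on `[0,∞)`. -/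


theorem common_lyapunov_for_projected_system (h r : ℕ) (hh : 0 < h) (hr : 0 < r)
    (m : Fin r → ℕ) (hmono : Antitone m) (hbd : ∀ l, m l ≤ h) (ξ : ℝ) (hξ : 0 < ξ) :
    ∃ (lam : ℝ) (k : Fin r → ℝ)
      (S : Matrix (Fin r × Fin (2 * h)) (Fin r × Fin (2 * h)) ℝ),
      0 < lam ∧ (∀ l, 0 < k l) ∧ S.PosDef ∧
      ∀ C : ℝ → Matrix (Fin (2 * h)) (Fin (2 * h)) ℝ,
        (∀ i j, Measurable fun t => C t i j) →
        (∀ᵐ t ∂(volume.restrict (Set.Ici (0:ℝ))),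
          (C t).IsSymm ∧ (C t - ξ • (1 : Matrix (Fin (2 * h)) (Fin (2 * h)) ℝ)).PosSemidef ∧
            ((1 : Matrix (Fin (2 * h)) (Fin (2 * h)) ℝ) - C t).PosSemidef) →
        ∀ Y : ℝ → Fin r → Fin (2 * h) → ℝ,
          ContinuousOn Y (Set.Ici (0:ℝ)) →
          (∀ t : ℝ, ∀ l : Fin r, (projP h (m l)).mulVec (Y t l) = Y t l) →
          (∀ᵐ t ∂(volume.restrict (Set.Ici (0:ℝ))), ∀ l : Fin r,
            HasDerivAt (fun s => Y s l)
              ((if hl : (l : ℕ) + 1 < r then Y t ⟨(l : ℕ) + 1, hl⟩ else 0)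
                - k l • (projP h (m l)).mulVec ((C t).mulVec (Y t ⟨0, hr⟩))) t) →
          ∀ᵐ t ∂(volume.restrict (Set.Ici (0:ℝ))),
            ∃ d : ℝ,
              HasDerivAt (fun s => dotProduct
                  (fun p : Fin r × Fin (2 * h) => Y s p.1 p.2)
                  (S.mulVec fun p : Fin r × Fin (2 * h) => Y s p.1 p.2)) d t ∧
              d ≤ -lam * ∑ l, ∑ i, (Y t l i) ^ 2 := by
  classical
  refine ⟨CLP.lam ξ, fun l => CLP.kk ξ (l : ℕ), CLP.Smat ξ r h m,
    CLP.lam_pos hξ, fun l => CLP.kk_pos hξ _, CLP.Smat_posdef hξ hmono hr, ?_⟩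
  intro C _hCm hCae Y _hYc hYproj hYode
  filter_upwards [hCae, hYode] with t hC hode
  obtain ⟨_hCsymm, hClb, _hCub⟩ := hC
  -- basic objects
  set S := CLP.Smat ξ r h m with hSdef
  set Y0 : Fin (2 * h) → ℝ := Y t ⟨0, hr⟩ with hY0def
  set ζ : Fin (2 * h) → ℝ := (C t).mulVec Y0 with hzdef
  set u : Fin (2 * h) → ℕ → ℝ := fun i n => if hn : n < r then Y t ⟨n, hn⟩ i else 0 with hudef
  have hur : ∀ (i : Fin (2*h)) (n : ℕ), r ≤ n → u i n = 0 := by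
    intro i n hn; simp [hudef, Nat.not_lt.2 hn]
  have huY : ∀ (l : Fin r) (i : Fin (2*h)), Y t l i = u i (l : ℕ) := by
    intro l i; simp [hudef, l.isLt]
  have hu0 : ∀ i : Fin (2*h), u i 0 = Y0 i := by
    intro i; simp [hudef, hr, hY0def]
  -- vanishing off the projections
  have hzero : ∀ (n : ℕ) (i : Fin (2*h)), ¬((i:ℕ) < 2 * CLP.mext r m n) → u i n = 0 := by
    intro n i hni
    by_cases hn : n < r
    · have hme : CLP.mext r m n = m ⟨n, hn⟩ := dif_pos hn
      rw [hme] at hni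
      have hpi := congrFun (hYproj t ⟨n, hn⟩) i
      unfold projP at hpi
      rw [CLP.projP_apply] at hpi
      rw [if_neg hni] at hpi
      simp only [hudef, dif_pos hn]
      exact hpi.symm
    · simp [hudef, hn]
  -- derivative components
  set Yd : Fin r → Fin (2*h) → ℝ := fun l =>
    ((if hl : (l : ℕ) + 1 < r then Y t ⟨(l : ℕ) + 1, hl⟩ else 0)
      - CLP.kk ξ (l : ℕ) • (projP h (m l)).mulVec ((C t).mulVec (Y t ⟨0, hr⟩))) with hYddef
  have hder : ∀ (l : Fin r) (i : Fin (2*h)), HasDerivAt (fun s => Y s l i) (Yd l i) t := by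
    intro l i
    exact (hasDerivAt_pi.1 (hode l)) i
  have hYdval : ∀ (l : Fin r) (i : Fin (2*h)),
      Yd l i = u i ((l:ℕ)+1)
        - CLP.kk ξ (l:ℕ) * (if (i:ℕ) < 2 * CLP.mext r m (l:ℕ) then ζ i else 0) := by
    intro l i
    simp only [hYddef, Pi.sub_apply, Pi.smul_apply, smul_eq_mul]
    congr 1
    · by_cases hl : (l:ℕ)+1 < r
      · rw [dif_pos hl]
        simp [hudef, hl]
      · rw [dif_neg hl]
        simp [hudef, hl]
    · congr 1
      unfold projP
      rw [CLP.projP_apply]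
      have hme : CLP.mext r m (l:ℕ) = m l := by
        rw [CLP.mext, dif_pos l.isLt]
      rw [hme, hzdef, hY0def]
  -- the derivative value
  set Ytf : Fin r × Fin (2*h) → ℝ := fun p => Y t p.1 p.2 with hYtfdef
  set Ydf : Fin r × Fin (2*h) → ℝ := fun p => Yd p.1 p.2 with hYdfdef
  set d0 : ℝ := ∑ p : Fin r × Fin (2*h), ∑ q : Fin r × Fin (2*h),
      S p q * (Ydf p * Ytf q + Ytf p * Ydf q) with hd0def
  refine ⟨d0, ?_, ?_⟩
  · -- HasDerivAt
    have hfun : (fun s => dotProduct (fun p : Fin r × Fin (2*h) => Y s p.1 p.2)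
          (S.mulVec fun p : Fin r × Fin (2*h) => Y s p.1 p.2))
        = fun s => ∑ p : Fin r × Fin (2*h), ∑ q : Fin r × Fin (2*h),
            S p q * (Y s p.1 p.2 * Y s q.1 q.2) := by
      funext s
      exact CLP.dot_expand S _ _
    rw [hfun]
    rw [hd0def]
    apply HasDerivAt.fun_sum
    intro p _
    apply HasDerivAt.fun_sum
    intro q _
    exact ((hder p.1 p.2).mul (hder q.1 q.2)).const_mul (S p q)
  · -- the estimate
    have hsymm : ∀ p q, S p q = S q p := by
      intro p q
      have hH : S.conjTranspose = S := CLP.Smat_herm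
      have h2 := congrFun (congrFun hH p) q
      rw [Matrix.conjTranspose_apply, star_trivial] at h2
      exact h2.symm
    have hswap : (∑ p : Fin r × Fin (2*h), ∑ q : Fin r × Fin (2*h), S p q * (Ytf p * Ydf q))
        = ∑ p : Fin r × Fin (2*h), ∑ q : Fin r × Fin (2*h), S p q * (Ydf p * Ytf q) := by
      rw [Finset.sum_comm]
      apply Finset.sum_congr rfl
      intro p _
      apply Finset.sum_congr rfl
      intro q _
      rw [hsymm q p]
      ring
    have hd0eq : d0 = 2 * dotProduct Ydf (S *ᵥ Ytf) := by
      rw [hd0def, CLP.dot_expand]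
      have hpt : ∀ p q : Fin r × Fin (2*h), S p q * (Ydf p * Ytf q + Ytf p * Ydf q)
          = S p q * (Ydf p * Ytf q) + S p q * (Ytf p * Ydf q) := fun p q => mul_add _ _ _
      simp only [hpt]
      simp only [Finset.sum_add_distrib]
      rw [hswap]
      ring
    rw [hSdef] at hd0eq
    rw [CLP.Smat_quad] at hd0eq
    -- per-column identity
    have hIi : ∀ i : Fin (2*h),
        (∑ l : Fin r, ∑ l' : Fin r, CLP.Sc ξ r m (l:ℕ) (l':ℕ) (i:ℕ) * (Ydf (l, i) * Ytf (l', i)))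
        = ((∑ n ∈ Finset.range r, CLP.aa ξ n * (u i n * u i (n+1)))
            - (∑ n ∈ Finset.range r, CLP.bb ξ n * (u i (n+1))^2)
            - (∑ n ∈ Finset.range r, CLP.bb ξ n * (u i n * u i (n+2))))
          - ζ i * ((1/2) * u i 0) := by
      intro i
      set w : ℕ → ℝ := fun n => if hn : n < r then Yd ⟨n, hn⟩ i else 0 with hwdef
      have hw : ∀ l : Fin r, Ydf (l, i) = w (l : ℕ) := by
        intro l; simp [hYdfdef, hwdef, l.isLt]
      have hconv : (∑ l : Fin r, ∑ l' : Fin r, CLP.Sc ξ r m (l:ℕ) (l':ℕ) (i:ℕ) * (Ydf (l,i) * Ytf (l',i)))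
          = ∑ n ∈ Finset.range r, w n * (∑ n' ∈ Finset.range r, CLP.Sc ξ r m n n' (i:ℕ) * u i n') := by
        rw [← Fin.sum_univ_eq_sum_range
          (fun n => w n * (∑ n' ∈ Finset.range r, CLP.Sc ξ r m n n' (i:ℕ) * u i n')) r]
        apply Finset.sum_congr rfl
        intro l _
        rw [← Fin.sum_univ_eq_sum_range (fun n' => CLP.Sc ξ r m (l:ℕ) n' (i:ℕ) * u i n') r]
        rw [Finset.mul_sum]
        apply Finset.sum_congr rfl
        intro l' _
        rw [hw l]
        have : Ytf (l', i) = u i (l' : ℕ) := by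
          rw [hYtfdef]; exact huY l' i
        rw [this]
        ring
      rw [hconv]
      have hwsplit : ∀ n ∈ Finset.range r,
          w n * (∑ n' ∈ Finset.range r, CLP.Sc ξ r m n n' (i:ℕ) * u i n')
          = u i (n+1) * (∑ n' ∈ Finset.range r, CLP.Sc ξ r m n n' (i:ℕ) * u i n')
            - ζ i * (if (i:ℕ) < 2 * CLP.mext r m n then
                CLP.kk ξ n * (∑ n' ∈ Finset.range r, CLP.Sc ξ r m n n' (i:ℕ) * u i n') else 0) := by
        intro n hn
        have hnr : n < r := Finset.mem_range.1 hn
        have hwn : w n = u i (n+1)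
            - CLP.kk ξ n * (if (i:ℕ) < 2 * CLP.mext r m n then ζ i else 0) := by
          rw [hwdef]
          simp only [dif_pos hnr]
          have hv := hYdval ⟨n, hnr⟩ i
          simpa using hv
        rw [hwn]
        split_ifs <;> ring
      rw [Finset.sum_congr rfl hwsplit, Finset.sum_sub_distrib]
      congr 1
      · -- A part
        have hA : ∀ n ∈ Finset.range r,
            u i (n+1) * (∑ n' ∈ Finset.range r, CLP.Sc ξ r m n n' (i:ℕ) * u i n')
            = CLP.aa ξ n * (u i n * u i (n+1)) - CLP.bb ξ n * (u i (n+1))^2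
              + (if n = 0 then 0 else -(CLP.bb ξ (n-1) * (u i (n-1) * u i (n-1+2)))) := by
          intro n hn
          have hnr := Finset.mem_range.1 hn
          rw [CLP.Sc_row hnr (u i) (hur i)]
          have L1 : u i (n+1) * (CLP.dd ξ r m n (i:ℕ) * u i n)
              = CLP.aa ξ n * (u i n * u i (n+1)) := by
            by_cases hal1 : (i:ℕ) < 2 * CLP.mext r m (n+1)
            · have hal : (i:ℕ) < 2 * CLP.mext r m n := CLP.alive_mono hmono hal1
              rw [CLP.dd, if_pos hal, if_pos hal1]; ring
            · rw [hzero (n+1) i hal1]; ring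
          have L2 : u i (n+1) * (CLP.bc ξ r m n (i:ℕ) * u i (n+1))
              = -(CLP.bb ξ n * (u i (n+1))^2) := by
            by_cases hal1 : (i:ℕ) < 2 * CLP.mext r m (n+1)
            · rw [CLP.bc, if_pos hal1]; ring
            · rw [hzero (n+1) i hal1]; ring
          have L3 : ∀ q : ℕ, u i (q+2) * (CLP.bc ξ r m q (i:ℕ) * u i q)
              = -(CLP.bb ξ q * (u i q * u i (q+2))) := by
            intro q
            by_cases hal1 : (i:ℕ) < 2 * CLP.mext r m (q+1)
            · rw [CLP.bc, if_pos hal1]; ring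
            · have hq2 : ¬((i:ℕ) < 2 * CLP.mext r m (q+2)) := by
                intro hc
                exact hal1 (CLP.alive_mono hmono hc)
              rw [hzero (q+2) i hq2, CLP.bc, if_neg hal1]; ring
          have hsplit3 : u i (n+1) * (if n = 0 then 0 else CLP.bc ξ r m (n-1) (i:ℕ) * u i (n-1))
              = (if n = 0 then 0 else -(CLP.bb ξ (n-1) * (u i (n-1) * u i (n-1+2)))) := by
            by_cases hn0 : n = 0
            · rw [if_pos hn0, if_pos hn0]; ring
            · rw [if_neg hn0, if_neg hn0]
              have he : n - 1 + 2 = n + 1 := by omega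
              rw [← L3 (n-1), he]
          calc u i (n+1) * (CLP.dd ξ r m n (i:ℕ) * u i n + CLP.bc ξ r m n (i:ℕ) * u i (n+1)
                + (if n = 0 then 0 else CLP.bc ξ r m (n-1) (i:ℕ) * u i (n-1)))
              = u i (n+1) * (CLP.dd ξ r m n (i:ℕ) * u i n)
                + u i (n+1) * (CLP.bc ξ r m n (i:ℕ) * u i (n+1))
                + u i (n+1) * (if n = 0 then 0 else CLP.bc ξ r m (n-1) (i:ℕ) * u i (n-1)) := by
                ring
            _ = CLP.aa ξ n * (u i n * u i (n+1)) - CLP.bb ξ n * (u i (n+1))^2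
                + (if n = 0 then 0 else -(CLP.bb ξ (n-1) * (u i (n-1) * u i (n-1+2)))) := by
                rw [L1, L2, hsplit3]; ring
        rw [Finset.sum_congr rfl hA, Finset.sum_add_distrib]
        have hsh : ∑ n ∈ Finset.range r,
              (if n = 0 then 0 else -(CLP.bb ξ (n-1) * (u i (n-1) * u i (n-1+2))))
            = ∑ n ∈ Finset.range r, -(CLP.bb ξ n * (u i n * u i (n+2))) := by
          have hW0 : -(CLP.bb ξ (r-1) * (u i (r-1) * u i (r-1+2))) = 0 := by
            rw [hur i (r-1+2) (by omega)]; ring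
          exact CLP.shift_sum hr (fun q => -(CLP.bb ξ q * (u i q * u i (q+2)))) hW0
        rw [hsh, Finset.sum_sub_distrib, Finset.sum_neg_distrib]
        ring
      · -- B part
        have hBrow : ∀ n ∈ Finset.range r,
            ζ i * (if (i:ℕ) < 2 * CLP.mext r m n then
                CLP.kk ξ n * (∑ n' ∈ Finset.range r, CLP.Sc ξ r m n n' (i:ℕ) * u i n') else 0)
            = ζ i * (∑ n' ∈ Finset.range r,
                (if (i:ℕ) < 2 * CLP.mext r m n then CLP.kk ξ n * CLP.Sc ξ r m n n' (i:ℕ) else 0) * u i n') := by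
          intro n _
          congr 1
          split_ifs with hal
          · rw [Finset.mul_sum]
            apply Finset.sum_congr rfl
            intro n' _
            ring
          · simp
        rw [Finset.sum_congr rfl hBrow, ← Finset.mul_sum]
        congr 1
        rw [Finset.sum_comm]
        have hfac : ∀ n' ∈ Finset.range r,
            (∑ n ∈ Finset.range r,
              (if (i:ℕ) < 2 * CLP.mext r m n then CLP.kk ξ n * CLP.Sc ξ r m n n' (i:ℕ) else 0) * u i n')
            = (if n' = 0 then (1/2) * u i 0 else 0) := by
          intro n' hn'
          rw [← Finset.sum_mul]
          by_cases hal : (i:ℕ) < 2 * CLP.mext r m n'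
          · rw [CLP.canc hξ hmono hal]
            by_cases h0 : n' = 0
            · subst h0; rw [if_pos rfl, if_pos rfl]
            · rw [if_neg h0, if_neg h0]; ring
          · rw [hzero n' i hal]
            by_cases h0 : n' = 0
            · subst h0
              rw [if_pos rfl, hzero 0 i hal]
              ring
            · rw [if_neg h0]; ring
        rw [Finset.sum_congr rfl hfac,
          Finset.sum_ite_eq' (Finset.range r) 0 (fun _ => (1/2) * u i 0),
          if_pos (Finset.mem_range.2 hr)]
    -- assemble
    have hIsum : d0 = 2 * (∑ i : Fin (2*h),
        (((∑ n ∈ Finset.range r, CLP.aa ξ n * (u i n * u i (n+1)))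
          - (∑ n ∈ Finset.range r, CLP.bb ξ n * (u i (n+1))^2)
          - (∑ n ∈ Finset.range r, CLP.bb ξ n * (u i n * u i (n+2))))
          - ζ i * ((1/2) * u i 0))) := by
      rw [hd0eq]
      congr 1
      exact Finset.sum_congr rfl (fun i _ => hIi i)
    -- the bound from the matrix inequality on C
    have hCb : ξ * (∑ i : Fin (2*h), (u i 0)^2) ≤ ∑ i : Fin (2*h), ζ i * u i 0 := by
      have hpsd := hClb.dotProduct_mulVec_nonneg Y0
      rw [star_trivial, Matrix.sub_mulVec, dotProduct_sub, Matrix.smul_mulVec,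
        Matrix.one_mulVec, dotProduct_smul, smul_eq_mul] at hpsd
      have h1 : Y0 ⬝ᵥ ((C t) *ᵥ Y0) = ∑ i : Fin (2*h), ζ i * u i 0 := by
        rw [← hzdef]
        unfold dotProduct
        apply Finset.sum_congr rfl
        intro i _
        rw [hu0 i]
        ring
      have h2 : Y0 ⬝ᵥ Y0 = ∑ i : Fin (2*h), (u i 0)^2 := by
        unfold dotProduct
        apply Finset.sum_congr rfl
        intro i _
        rw [hu0 i]
        ring
      rw [h1, h2] at hpsd
      linarith
    -- per-column claim
    have hcl : ∀ i : Fin (2*h),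
        ((∑ n ∈ Finset.range r, CLP.aa ξ n * (u i n * u i (n+1)))
          - (∑ n ∈ Finset.range r, CLP.bb ξ n * (u i (n+1))^2)
          - (∑ n ∈ Finset.range r, CLP.bb ξ n * (u i n * u i (n+2))))
          - (ξ/2) * (u i 0)^2
        ≤ -(CLP.lam ξ/2) * ∑ n ∈ Finset.range r, (u i n)^2 := by
      intro i
      exact CLP.claim hξ hr (u i) (hur i)
    have hclsum : ∑ i : Fin (2*h),
        (((∑ n ∈ Finset.range r, CLP.aa ξ n * (u i n * u i (n+1)))
          - (∑ n ∈ Finset.range r, CLP.bb ξ n * (u i (n+1))^2)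
          - (∑ n ∈ Finset.range r, CLP.bb ξ n * (u i n * u i (n+2))))
          - (ξ/2) * (u i 0)^2)
        ≤ ∑ i : Fin (2*h), (-(CLP.lam ξ/2) * ∑ n ∈ Finset.range r, (u i n)^2) :=
      Finset.sum_le_sum (fun i _ => hcl i)
    -- sum identities
    have e1 : ∑ i : Fin (2*h),
        (((∑ n ∈ Finset.range r, CLP.aa ξ n * (u i n * u i (n+1)))
          - (∑ n ∈ Finset.range r, CLP.bb ξ n * (u i (n+1))^2)
          - (∑ n ∈ Finset.range r, CLP.bb ξ n * (u i n * u i (n+2))))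
          - ζ i * ((1/2) * u i 0))
        = (∑ i : Fin (2*h),
          (((∑ n ∈ Finset.range r, CLP.aa ξ n * (u i n * u i (n+1)))
          - (∑ n ∈ Finset.range r, CLP.bb ξ n * (u i (n+1))^2)
          - (∑ n ∈ Finset.range r, CLP.bb ξ n * (u i n * u i (n+2))))
          - (ξ/2) * (u i 0)^2))
          + ((ξ/2) * (∑ i : Fin (2*h), (u i 0)^2)
            - (1/2) * (∑ i : Fin (2*h), ζ i * u i 0)) := by
      rw [Finset.mul_sum, Finset.mul_sum, ← Finset.sum_sub_distrib,
        ← Finset.sum_add_distrib]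
      apply Finset.sum_congr rfl
      intro i _
      ring
    rw [e1] at hIsum
    have hclsum' : ∑ i : Fin (2*h),
        (((∑ n ∈ Finset.range r, CLP.aa ξ n * (u i n * u i (n+1)))
          - (∑ n ∈ Finset.range r, CLP.bb ξ n * (u i (n+1))^2)
          - (∑ n ∈ Finset.range r, CLP.bb ξ n * (u i n * u i (n+2))))
          - (ξ/2) * (u i 0)^2)
        ≤ -(CLP.lam ξ/2) * (∑ i : Fin (2*h), ∑ n ∈ Finset.range r, (u i n)^2) := by
      rw [Finset.mul_sum]
      exact hclsum
    have hlast : d0 ≤ -CLP.lam ξ * (∑ i : Fin (2*h), ∑ n ∈ Finset.range r, (u i n)^2) := by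
      rw [hIsum]
      linarith [hclsum', hCb]
    have hfin : (∑ i : Fin (2*h), ∑ n ∈ Finset.range r, (u i n)^2)
        = ∑ l : Fin r, ∑ i : Fin (2*h), (Y t l i)^2 := by
      have hper : ∀ i : Fin (2*h), ∑ n ∈ Finset.range r, (u i n)^2
          = ∑ l : Fin r, (Y t l i)^2 := by
        intro i
        rw [← Fin.sum_univ_eq_sum_range (fun n => (u i n)^2) r]
        exact Finset.sum_congr rfl (fun l _ => by rw [huY l i])
      rw [Finset.sum_congr rfl (fun i _ => hper i), Finset.sum_comm]
    rw [hfin] at hlast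
    exact hlast




end
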